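/- Let Ψ(K,M) := (½ J^{-1}K^T M^{-1}K, K, M) for (K,M) with M invertible symmetric. Then Ψ is equivariant for the Jacobi group action (g,A,B)·(K,M) = (Kg^{-1} - MA^T J, M) on the dual Heisenberg algebra and the coadjoint action Ad*_{(g,A,B)^{-1}}(Y,K,M) = (gYg^{-1} + J^{-1}(JAKg^{-1})^{sym} - ½ A M A^T J, Kg^{-1} - MA^T J, M) on the dual Jacobi algebra: Ψ((g,A,B)·(K,M)) = Ad*_{(g,A,B)^{-1}} Ψ(K,M). -/
import Mathlib


open Matrix

/-- The symmetric part of a square matrix. -/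
noncomputable def symPartM {m : Type*} [Fintype m] (M : Matrix m m ℝ) : Matrix m m ℝ :=
  (1 / 2 : ℝ) • (M + Mᵀ)

/-- The momentum map `Ψ(K,M) = (½ J⁻¹ Kᵀ M⁻¹ K, K, M)` from the dual Heisenberg algebra
to the dual Jacobi algebra. -/
noncomputable def PsiMap {k d : ℕ} (J : Matrix (Fin (2 * k)) (Fin (2 * k)) ℝ)
    (K : Matrix (Fin d) (Fin (2 * k)) ℝ) (M : Matrix (Fin d) (Fin d) ℝ) :
    Matrix (Fin (2 * k)) (Fin (2 * k)) ℝ × Matrix (Fin d) (Fin (2 * k)) ℝ ×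
      Matrix (Fin d) (Fin d) ℝ :=
  ((1 / 2 : ℝ) • (J⁻¹ * Kᵀ * M⁻¹ * K), (K, M))

/-- `Ψ(K,M) = (½ J⁻¹Kᵀ M⁻¹K, K, M)` is equivariant: applying `Ψ` to the Jacobi group
action `(g,A,B)·(K,M) = (Kg⁻¹ - MAᵀJ, M)` on the dual Heisenberg algebra agrees with the
coadjoint action
`Ad*_{(g,A,B)⁻¹}(Y,K,M) = (gYg⁻¹ + J⁻¹(JAKg⁻¹)^sym - ½ AMAᵀJ, Kg⁻¹ - MAᵀJ, M)`
applied to `Ψ(K,M)`. -/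
theorem psi_equivariant (k d : ℕ)
    (J : Matrix (Fin (2 * k)) (Fin (2 * k)) ℝ) (hanti : Jᵀ = -J) (hJ : IsUnit J.det)
    (g : Matrix (Fin (2 * k)) (Fin (2 * k)) ℝ) (hg : gᵀ * J * g = J)
    (hgdet : IsUnit g.det)
    (A : Matrix (Fin (2 * k)) (Fin d) ℝ) (B : Matrix (Fin d) (Fin d) ℝ) (hB : Bᵀ = B)
    (K : Matrix (Fin d) (Fin (2 * k)) ℝ) (M : Matrix (Fin d) (Fin d) ℝ)
    (hM : Mᵀ = M) (hMdet : IsUnit M.det) :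
    PsiMap J (K * g⁻¹ - M * Aᵀ * J) M =
      (g * ((1 / 2 : ℝ) • (J⁻¹ * Kᵀ * M⁻¹ * K)) * g⁻¹ +
          J⁻¹ * symPartM (J * A * K * g⁻¹) - (1 / 2 : ℝ) • (A * M * Aᵀ * J),
        (K * g⁻¹ - M * Aᵀ * J, M)) := by
  have hJinvT : (J⁻¹)ᵀ = -J⁻¹ := by
    rw [transpose_nonsing_inv, hanti]
    apply inv_eq_left_inv
    simp [Matrix.neg_mul, Matrix.mul_neg, nonsing_inv_mul J hJ]
  have hginvT : (g⁻¹)ᵀ = J * g * J⁻¹ := by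
    rw [transpose_nonsing_inv]
    apply inv_eq_right_inv
    calc gᵀ * (J * g * J⁻¹) = (gᵀ * J * g) * J⁻¹ := by
          simp only [Matrix.mul_assoc]
      _ = 1 := by rw [hg, mul_nonsing_inv J hJ]
  simp only [PsiMap, symPartM, Prod.mk.injEq, and_true]
  simp only [transpose_sub, transpose_mul, transpose_transpose, hanti, hM, hginvT, hJinvT,
    Matrix.sub_mul, Matrix.mul_sub, Matrix.mul_add, Matrix.add_mul,
    Matrix.neg_mul, Matrix.mul_neg, Matrix.smul_mul, Matrix.mul_smul,
    smul_add, smul_sub, smul_neg, sub_neg_eq_add, Matrix.mul_assoc,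
    Matrix.nonsing_inv_mul_cancel_left _ _ hJ, Matrix.mul_nonsing_inv_cancel_left _ _ hJ,
    Matrix.nonsing_inv_mul_cancel_left _ _ hMdet, Matrix.mul_nonsing_inv_cancel_left _ _ hMdet]
  abel
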